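/- Let L be a Lie algebra over a commutative ring R, let M be an R-module, and let ρ : L → End_R(M) be a representation of L on M, i.e. an R-linear map satisfying ρ(⁅x, y⁆) = ρ(x) ∘ ρ(y) − ρ(y) ∘ ρ(x) for all x, y ∈ L. Then for all r, t_1, …, t_n ∈ L the following operator identity holds: ρ(t_n) ∘ ρ(t_{n−1}) ∘ ⋯ ∘ ρ(t_1) ∘ ρ(r) = Σ_{S ⊆ {1,…,n}} ρ( ad(t_{s_m}) ad(t_{s_{m−1}}) ⋯ ad(t_{s_1}) (r) ) ∘ ρ(t_{u_p}) ∘ ρ(t_{u_{p−1}}) ∘ ⋯ ∘ ρ(t_{u_1}), where for each subset S of {1,…,n}, s_1 < s_2 < … < s_m are the elements of S listed in increasing order, u_1 < u_2 < … < u_p are the elements of the complement {1,…,n} \ S listed in increasing order, and ad(x)(y) = ⁅x, y⁆ (the summand for S = ∅ is ρ(r) ∘ ρ(t_n) ∘ ⋯ ∘ ρ(t_1)). -/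

import Mathlib

open Finset

set_option linter.unnecessarySimpa false

private lemma foldl_mul' {α A : Type*} [Monoid A] (g : α → A) (l : List α) (a b : A) :
    l.foldl (fun f i => g i * f) (a * b) = l.foldl (fun f i => g i * f) a * b := by
  induction l generalizing a with
  | nil => rfl
  | cons x xs ih => rw [List.foldl_cons, List.foldl_cons, ← mul_assoc, ih]

private lemma foldl_add' {α A : Type*} [Ring A] (g : α → A) (l : List α) (a b : A) :
    l.foldl (fun f i => g i * f) (a + b)
      = l.foldl (fun f i => g i * f) a + l.foldl (fun f i => g i * f) b := by
  induction l generalizing a b with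
  | nil => rfl
  | cons x xs ih => rw [List.foldl_cons, mul_add, ih, List.foldl_cons, List.foldl_cons]

private lemma sort_map_succ {n : ℕ} (S : Finset (Fin n)) :
    ((S.map ⟨Fin.succ, Fin.succ_injective n⟩).sort (· ≤ ·))
      = (S.sort (· ≤ ·)).map Fin.succ := by
  refine (fun h1 h2 h3 => List.Perm.eq_of_pairwise' (r := (· ≤ ·)) h2 h3 h1) ?_ ?_ ?_
  · rw [← Multiset.coe_eq_coe]
    rw [Finset.sort_eq, Finset.map_val, ← Finset.sort_eq S (· ≤ ·)]
    rfl
  · exact Finset.pairwise_sort _ _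
  · exact List.Pairwise.map _ (fun a b h => Fin.strictMono_succ.monotone h) (Finset.pairwise_sort _ _)

private lemma compl_map_succ {n : ℕ} (S : Finset (Fin n)) :
    (S.map ⟨Fin.succ, Fin.succ_injective n⟩)ᶜ
      = insert (0 : Fin (n + 1)) (Sᶜ.map ⟨Fin.succ, Fin.succ_injective n⟩) := by
  ext x
  cases x using Fin.cases with
  | zero => simp [fun (x : Fin n) => Fin.succ_ne_zero x]
  | succ j => simp [Fin.succ_ne_zero, (Fin.succ_injective n).eq_iff]

private lemma compl_insert_zero {n : ℕ} (S : Finset (Fin n)) :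
    (insert (0 : Fin (n + 1)) (S.map ⟨Fin.succ, Fin.succ_injective n⟩))ᶜ
      = Sᶜ.map ⟨Fin.succ, Fin.succ_injective n⟩ := by
  ext x
  cases x using Fin.cases with
  | zero => simp [fun (x : Fin n) => Fin.succ_ne_zero x]
  | succ j => simp [Fin.succ_ne_zero, (Fin.succ_injective n).eq_iff]

private lemma sum_finset_fin_succ {n : ℕ} {A : Type*} [AddCommMonoid A]
    (F : Finset (Fin (n + 1)) → A) :
    ∑ S : Finset (Fin (n + 1)), F S
      = ∑ S : Finset (Fin n),
          (F (insert 0 (S.map ⟨Fin.succ, Fin.succ_injective n⟩))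
            + F (S.map ⟨Fin.succ, Fin.succ_injective n⟩)) := by
  classical
  set e : Fin n ↪ Fin (n + 1) := ⟨Fin.succ, Fin.succ_injective n⟩ with he
  set g : Finset (Fin n) × Bool → Finset (Fin (n + 1)) :=
    fun p => if p.2 then insert 0 (p.1.map e) else p.1.map e with hg
  have h0 : ∀ (S : Finset (Fin n)), (0 : Fin (n + 1)) ∉ S.map e := by
    intro S h
    rcases Finset.mem_map.1 h with ⟨j, _, hj⟩
    exact Fin.succ_ne_zero j hj
  have hginj : Function.Injective g := by
    rintro ⟨S, b⟩ ⟨T, c⟩ h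
    have hbc : b = c := by
      have hm : ((0 : Fin (n + 1)) ∈ g (S, b)) = ((0 : Fin (n + 1)) ∈ g (T, c)) := by rw [h]
      cases b <;> cases c <;> simpa [hg, h0 S, h0 T] using hm
    subst hbc
    rcases b with _ | _
    · simp only [hg, if_neg Bool.false_ne_true] at h
      exact Prod.ext (Finset.map_injective e h) rfl
    · simp only [hg, if_pos rfl] at h
      have : S.map e = T.map e := by
        have := congrArg (fun X => Finset.erase X 0) h
        simpa [Finset.erase_insert (h0 S), Finset.erase_insert (h0 T)] using this
      exact Prod.ext (Finset.map_injective e this) rfl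
  have hgbij : Function.Bijective g := by
    rw [Fintype.bijective_iff_injective_and_card]
    refine ⟨hginj, ?_⟩
    simp [Fintype.card_finset, pow_succ, mul_comm]
  rw [← Function.Bijective.sum_comp hgbij F]
  rw [Fintype.sum_prod_type]
  refine Finset.sum_congr rfl fun S _ => ?_
  rw [Fintype.sum_bool]
  simp [hg]

private lemma key {R : Type*} [CommRing R] {L : Type*} [LieRing L] [LieAlgebra R L]
    {M : Type*} [AddCommGroup M] [Module R M]
    (ρ : L →ₗ[R] Module.End R M)
    (hρ : ∀ x y : L, ρ ⁅x, y⁆ = ρ x * ρ y - ρ y * ρ x)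
    (n : ℕ) (t : Fin n → L) (r : L) :
    ((Finset.univ : Finset (Fin n)).sort (· ≤ ·)).foldl (fun f i => ρ (t i) * f) (ρ r)
      = ∑ S : Finset (Fin n),
          ρ ((S.sort (· ≤ ·)).foldl (fun x i => ⁅t i, x⁆) r)
            * ((Sᶜ.sort (· ≤ ·)).foldl (fun f i => ρ (t i) * f) 1) := by
  induction n generalizing r with
  | zero =>
    have h : ∀ S : Finset (Fin 0), S = ∅ := fun S => Finset.eq_empty_of_isEmpty S
    haveI : Subsingleton (Finset (Fin 0)) := ⟨fun a b => (h a).trans (h b).symm⟩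
    rw [Fintype.sum_subsingleton _ (∅ : Finset (Fin 0))]
    simp [h (∅ᶜ : Finset (Fin 0))]
  | succ n ih =>
    classical
    set e : Fin n ↪ Fin (n + 1) := ⟨Fin.succ, Fin.succ_injective n⟩ with he
    have h0 : ∀ (S : Finset (Fin n)), (0 : Fin (n + 1)) ∉ S.map e := by
      intro S h
      rcases Finset.mem_map.1 h with ⟨j, _, hj⟩
      exact Fin.succ_ne_zero j hj
    have hle : ∀ (S : Finset (Fin n)) (b : Fin (n + 1)), b ∈ S.map e → (0 : Fin (n + 1)) ≤ b :=
      fun _ b _ => Fin.zero_le b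
    -- LHS
    rw [Fin.univ_succ, Finset.sort_cons _ (hle _), List.foldl_cons, sort_map_succ,
      List.foldl_map]
    have hsplit : ρ (t 0) * ρ r = ρ ⁅t 0, r⁆ + ρ r * ρ (t 0) := by
      rw [hρ, sub_add_cancel]
    rw [hsplit, foldl_add', foldl_mul',
      ih (fun i => t i.succ) ⁅t 0, r⁆, ih (fun i => t i.succ) r]
    -- RHS
    rw [sum_finset_fin_succ, Finset.sum_add_distrib]
    congr 1
    · refine Finset.sum_congr rfl fun S _ => ?_
      rw [Finset.sort_insert _ (hle S) (h0 S), List.foldl_cons, sort_map_succ, List.foldl_map,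
        compl_insert_zero, sort_map_succ, List.foldl_map]
    · rw [Finset.sum_mul]
      refine Finset.sum_congr rfl fun S _ => ?_
      rw [sort_map_succ, List.foldl_map, compl_map_succ,
        Finset.sort_insert _ (hle Sᶜ) (h0 Sᶜ), List.foldl_cons, sort_map_succ, List.foldl_map,
        mul_one, mul_assoc]
      congr 1
      rw [show ρ (t 0) = 1 * ρ (t 0) from (one_mul _).symm, foldl_mul', one_mul]


/-- Let `ρ : L → End R M` be a representation of a Lie algebra `L` over a
commutative ring `R` on an `R`-module `M`.  Then for all `r, t₁, …, tₙ ∈ L`,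
`ρ(tₙ) ∘ ⋯ ∘ ρ(t₁) ∘ ρ(r) = Σ_{S ⊆ {1,…,n}} ρ(ad(t_{s_m})⋯ad(t_{s_1}) r) ∘ ρ(t_{u_p}) ∘ ⋯ ∘ ρ(t_{u_1})`,
where `s_1 < … < s_m` enumerate `S` and `u_1 < … < u_p` enumerate its complement. -/
theorem stmt4 {R : Type*} [CommRing R] {L : Type*} [LieRing L] [LieAlgebra R L]
    {M : Type*} [AddCommGroup M] [Module R M]
    (ρ : L →ₗ[R] Module.End R M)
    (hρ : ∀ x y : L, ρ ⁅x, y⁆ = ρ x * ρ y - ρ y * ρ x)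
    (n : ℕ) (t : Fin n → L) (r : L) :
    ((Finset.univ : Finset (Fin n)).sort (· ≤ ·)).foldl (fun f i => ρ (t i) * f) (ρ r)
      = ∑ S : Finset (Fin n),
          ρ ((S.sort (· ≤ ·)).foldl (fun x i => ⁅t i, x⁆) r)
            * ((Sᶜ.sort (· ≤ ·)).foldl (fun f i => ρ (t i) * f) 1) := by
  exact key ρ hρ n t r
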